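/- Suppose w ≡ 1, c is integer-valued, ℓ takes values in ℤ ∪ {−∞}, and u takes values in ℤ ∪ {+∞}. If δ ≥ 0 is such that p^δ is an optimal deviation vector for the constrained minimum-cost inverse optimization problem under the ℓ∞-norm objective, then p^{⌈δ⌉} is an integer-valued feasible deviation vector that minimizes ‖·‖_∞ among all integer-valued feasible deviation vectors. -/

import Mathlib

open Finset

noncomputable section

variable {S : Type*}

/-- A deviation vector `p` is feasible: it respects the bounds `l ≤ p ≤ u`
(interpreted in the extended reals) and makes `Fstar` a minimum-cost member
of `𝓕` with respect to `c - p`. -/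
def IsFeasibleDev (𝓕 : Finset (Finset S)) (Fstar : Finset S)
    (c : S → ℝ) (l u : S → EReal) (p : S → ℝ) : Prop :=
  (∀ s, l s ≤ (p s : EReal) ∧ (p s : EReal) ≤ u s) ∧
  ∀ F ∈ 𝓕, ∑ s ∈ Fstar, (c s - p s) ≤ ∑ s ∈ F, (c s - p s)

/-- The weighted ℓ∞-norm `‖p‖_{∞,w} = max_{s ∈ S} w(s)·|p(s)|`. -/
def normI [Fintype S] [Nonempty S] (w p : S → ℝ) : ℝ :=
  (univ : Finset S).sup' univ_nonempty fun s => w s * |p s|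

/-- The special deviation vector `p^δ` of the weighted ℓ∞-norm setting:
`δ/w(s)` clamped to `[ℓ(s), u(s)]` on `F*`, and `-δ/w(s)` clamped to
`[ℓ(s), u(s)]` outside of `F*`. -/
def pI [DecidableEq S] (Fstar : Finset S) (l u : S → EReal) (w : S → ℝ) (δ : ℝ) (s : S) : ℝ :=
  if s ∈ Fstar then
    if ((δ / w s : ℝ) : EReal) < l s then (l s).toReal
    else if u s < ((δ / w s : ℝ) : EReal) then (u s).toReal
    else δ / w s
  else
    if ((-(δ / w s) : ℝ) : EReal) < l s then (l s).toReal
    else if u s < ((-(δ / w s) : ℝ) : EReal) then (u s).toReal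
    else -(δ / w s)

/-- clamp of a real `a` into `[l,u]` in the EReal sense. -/
def clE (l u : EReal) (a : ℝ) : ℝ :=
  if (a : EReal) < l then l.toReal else if u < (a : EReal) then u.toReal else a

variable {l u : EReal} {a b : ℝ}

lemma clE_mem (hl : l ≠ ⊤) (hu : u ≠ ⊥) (hlu : l ≤ u) :
    l ≤ ((clE l u a : ℝ) : EReal) ∧ ((clE l u a : ℝ) : EReal) ≤ u := by
  unfold clE
  split_ifs with h1 h2
  · have hlb : l ≠ ⊥ := ((EReal.bot_lt_coe a).trans h1).ne'
    rw [EReal.coe_toReal hl hlb]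
    exact ⟨le_refl _, hlu⟩
  · have hut : u ≠ ⊤ := (h2.trans (EReal.coe_lt_top a)).ne
    rw [EReal.coe_toReal hut hu]
    exact ⟨hlu, le_refl _⟩
  · exact ⟨not_lt.mp h1, not_lt.mp h2⟩

lemma clE_mono (hl : l ≠ ⊤) (hu : u ≠ ⊥) (hlu : l ≤ u) (hab : a ≤ b) :
    clE l u a ≤ clE l u b := by
  have hab' : (a : EReal) ≤ (b : EReal) := EReal.coe_le_coe_iff.mpr hab
  by_cases h1 : (a : EReal) < l
  · have hlb : l ≠ ⊥ := ((EReal.bot_lt_coe a).trans h1).ne'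
    have hb := (clE_mem (a := b) hl hu hlu).1
    have := EReal.toReal_le_toReal hb hlb (EReal.coe_ne_top _)
    unfold clE
    rw [if_pos h1]
    simpa [clE] using this
  · by_cases h2 : u < (a : EReal)
    · have h2b : u < (b : EReal) := h2.trans_le hab'
      have h1b : ¬ ((b : EReal) < l) := fun h =>
        absurd ((hlu.trans_lt h2).trans_le hab') (not_lt.mpr h.le)
      unfold clE
      rw [if_pos h2b, if_neg h1, if_neg h1b, if_pos h2]
    · have h1b : ¬ ((b : EReal) < l) := fun h => h1 (hab'.trans_lt h)
      unfold clE
      rw [if_neg h1, if_neg h2, if_neg h1b]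
      by_cases h3 : u < (b : EReal)
      · rw [if_pos h3]
        have hut : u ≠ ⊤ := (h3.trans (EReal.coe_lt_top b)).ne
        have := EReal.toReal_le_toReal (not_lt.mp h2) (EReal.coe_ne_bot a) hut
        simpa using this
      · rw [if_neg h3]; exact hab

lemma clE_int (hl : l = ⊥ ∨ ∃ z : ℤ, l = ((z : ℝ) : EReal))
    (hu : u = ⊤ ∨ ∃ z : ℤ, u = ((z : ℝ) : EReal))
    (ha : ∃ z : ℤ, a = (z : ℝ)) : ∃ z : ℤ, clE l u a = (z : ℝ) := by
  unfold clE
  split_ifs with h1 h2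
  · rcases hl with h | ⟨z, hz⟩
    · simp [h] at h1
    · exact ⟨z, by simp [hz]⟩
  · rcases hu with h | ⟨z, hz⟩
    · simp [h] at h2
    · exact ⟨z, by simp [hz]⟩
  · exact ha

/-- If `|a| ≤ N`, `l ≤ N`, `-N ≤ u`, then `|clE l u a| ≤ N`. -/
lemma clE_abs_le {N : ℝ} (hl : l ≤ ((N : ℝ) : EReal)) (hu : ((-N : ℝ) : EReal) ≤ u)
    (haN : |a| ≤ N) : |clE l u a| ≤ N := by
  have haN1 : -N ≤ a := neg_le_of_abs_le haN
  have haN2 : a ≤ N := le_of_abs_le haN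
  unfold clE
  split_ifs with h1 h2
  · have hlb : l ≠ ⊥ := ((EReal.bot_lt_coe a).trans h1).ne'
    have hlt : l ≠ ⊤ := (hl.trans_lt (EReal.coe_lt_top N)).ne
    have h1' : a ≤ l.toReal := by
      have := EReal.toReal_le_toReal h1.le (EReal.coe_ne_bot a) hlt
      simpa using this
    have h2' : l.toReal ≤ N := by
      have := EReal.toReal_le_toReal hl hlb (EReal.coe_ne_top N)
      simpa using this
    rw [abs_le]; exact ⟨le_trans haN1 h1', h2'⟩
  · have hut : u ≠ ⊤ := (h2.trans (EReal.coe_lt_top a)).ne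
    have hub : u ≠ ⊥ := ((EReal.bot_lt_coe (-N)).trans_le hu).ne'
    have h1' : u.toReal ≤ a := by
      have := EReal.toReal_le_toReal h2.le hub (EReal.coe_ne_top a)
      simpa using this
    have h2' : -N ≤ u.toReal := by
      have := EReal.toReal_le_toReal hu (EReal.coe_ne_bot (-N)) hut
      simpa using this
    rw [abs_le]; exact ⟨h2', le_trans h1' haN2⟩
  · exact haN

lemma clE_stable_pos {N : ℝ} (hl : l ≠ ⊤) (hN : |clE l u a| ≤ N) (hNa : N < a)
    (hab : a ≤ b) : clE l u b = clE l u a := by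
  unfold clE at *
  have h1 : ¬ ((a : EReal) < l) := by
    intro h
    rw [if_pos h] at hN
    have h' : a ≤ l.toReal := by
      have := EReal.toReal_le_toReal h.le (EReal.coe_ne_bot a) hl
      simpa using this
    exact absurd hNa (not_lt.mpr (h'.trans (le_of_abs_le hN)))
  rw [if_neg h1] at hN
  have h2 : u < (a : EReal) := by
    by_contra h
    rw [if_neg h] at hN
    exact absurd hNa (not_lt.mpr (le_of_abs_le hN))
  have h1b : ¬ ((b : EReal) < l) := fun h =>
    h1 ((EReal.coe_le_coe_iff.mpr hab).trans_lt h)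
  rw [if_neg h1b, if_pos (h2.trans_le (EReal.coe_le_coe_iff.mpr hab)), if_neg h1, if_pos h2]

lemma clE_stable_neg {N : ℝ} (hu : u ≠ ⊥) (hN : |clE l u (-a)| ≤ N) (hNa : N < a)
    (hab : a ≤ b) : clE l u (-b) = clE l u (-a) := by
  unfold clE at *
  by_cases h1 : ((-a : ℝ) : EReal) < l
  · have h1b : ((-b : ℝ) : EReal) < l :=
      lt_of_le_of_lt (EReal.coe_le_coe_iff.mpr (neg_le_neg hab)) h1
    rw [if_pos h1, if_pos h1b]
  · exfalso
    rw [if_neg h1] at hN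
    by_cases h2 : u < ((-a : ℝ) : EReal)
    · rw [if_pos h2] at hN
      have hut : u ≠ ⊤ := (h2.trans (EReal.coe_lt_top _)).ne
      have h' : u.toReal ≤ -a := by
        have := EReal.toReal_le_toReal h2.le hu (EReal.coe_ne_top _)
        simpa using this
      have h'' := neg_le_of_abs_le hN
      exact absurd hNa (not_lt.mpr (by linarith))
    · rw [if_neg h2, abs_neg] at hN
      exact absurd hNa (not_lt.mpr (le_of_abs_le hN))

lemma pI_eq {S : Type*} [DecidableEq S] (Fstar : Finset S) (l u : S → EReal) (d : ℝ) (s : S) :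
    pI Fstar l u (fun _ => 1) d s =
      if s ∈ Fstar then clE (l s) (u s) d else clE (l s) (u s) (-d) := by
  unfold pI clE; simp only [div_one]

lemma sum_compare {S : Type*} [DecidableEq S] (Fstar F : Finset S) (c p p' : S → ℝ)
    (h1 : ∀ s ∈ Fstar, p s ≤ p' s) (h2 : ∀ s, s ∉ Fstar → p' s ≤ p s)
    (h : ∑ s ∈ Fstar, (c s - p s) ≤ ∑ s ∈ F, (c s - p s)) :
    ∑ s ∈ Fstar, (c s - p' s) ≤ ∑ s ∈ F, (c s - p' s) := by
  have k1 := Finset.sum_sdiff_sub_sum_sdiff (s₁ := F) (s₂ := Fstar) (f := fun s => c s - p s)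
  have k2 := Finset.sum_sdiff_sub_sum_sdiff (s₁ := F) (s₂ := Fstar) (f := fun s => c s - p' s)
  have A : ∑ s ∈ Fstar \ F, (c s - p' s) ≤ ∑ s ∈ Fstar \ F, (c s - p s) :=
    Finset.sum_le_sum fun s hs => by
      have := h1 s (Finset.mem_sdiff.mp hs).1; linarith
  have B : ∑ s ∈ F \ Fstar, (c s - p s) ≤ ∑ s ∈ F \ Fstar, (c s - p' s) :=
    Finset.sum_le_sum fun s hs => by
      have := h2 s (Finset.mem_sdiff.mp hs).2; linarith
  linarith

theorem linf_integral_rounding [Fintype S] [DecidableEq S] [Nonempty S]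
    (𝓕 : Finset (Finset S)) (Fstar : Finset S) (c : S → ℝ) (l u : S → EReal)
    (hl : ∀ s, l s ≠ ⊤) (hu : ∀ s, u s ≠ ⊥)
    (hlu : ∀ s, l s ≤ u s) (h𝓕 : 𝓕.Nonempty) (hF : Fstar ∈ 𝓕)
    (hc : ∀ s, ∃ z : ℤ, c s = (z : ℝ))
    (hlint : ∀ s, l s = ⊥ ∨ ∃ z : ℤ, l s = ((z : ℝ) : EReal))
    (huint : ∀ s, u s = ⊤ ∨ ∃ z : ℤ, u s = ((z : ℝ) : EReal))
    (δ : ℝ) (hδ : 0 ≤ δ)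
    (hfeas : IsFeasibleDev 𝓕 Fstar c l u (pI Fstar l u (fun _ => 1) δ))
    (hopt : ∀ q : S → ℝ, IsFeasibleDev 𝓕 Fstar c l u q →
      normI (fun _ => 1) (pI Fstar l u (fun _ => 1) δ) ≤ normI (fun _ => 1) q) :
    (∀ s : S, ∃ z : ℤ, pI Fstar l u (fun _ => 1) (⌈δ⌉ : ℝ) s = (z : ℝ)) ∧
    IsFeasibleDev 𝓕 Fstar c l u (pI Fstar l u (fun _ => 1) (⌈δ⌉ : ℝ)) ∧
    ∀ q : S → ℝ, IsFeasibleDev 𝓕 Fstar c l u q → (∀ s : S, ∃ z : ℤ, q s = (z : ℝ)) →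
      normI (fun _ => 1) (pI Fstar l u (fun _ => 1) (⌈δ⌉ : ℝ)) ≤ normI (fun _ => 1) q := by
  have hdd' : δ ≤ ((⌈δ⌉ : ℤ) : ℝ) := Int.le_ceil δ
  have hd'0 : (0 : ℝ) ≤ ((⌈δ⌉ : ℤ) : ℝ) := by exact_mod_cast Int.ceil_nonneg hδ
  refine ⟨?_, ⟨?_, ?_⟩, ?_⟩
  · -- integrality
    intro s
    rw [pI_eq]
    split_ifs
    · exact clE_int (hlint s) (huint s) ⟨⌈δ⌉, rfl⟩
    · exact clE_int (hlint s) (huint s) ⟨-⌈δ⌉, by push_cast; ring⟩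
  · -- bounds
    intro s
    rw [pI_eq]
    split_ifs
    · exact clE_mem (hl s) (hu s) (hlu s)
    · exact clE_mem (hl s) (hu s) (hlu s)
  · -- min-cost constraints
    intro F hF'
    refine sum_compare Fstar F c (pI Fstar l u (fun _ => 1) δ) _ ?_ ?_ (hfeas.2 F hF')
    · intro s hs
      rw [pI_eq, pI_eq, if_pos hs, if_pos hs]
      exact clE_mono (hl s) (hu s) (hlu s) hdd'
    · intro s hs
      rw [pI_eq, pI_eq, if_neg hs, if_neg hs]
      exact clE_mono (hl s) (hu s) (hlu s) (neg_le_neg hdd')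
  · -- optimality among integral vectors
    intro q hq hqint
    set N : ℝ := normI (fun _ => 1) q with hNdef
    have hqle : ∀ s, |q s| ≤ N := by
      intro s
      have := Finset.le_sup' (fun s => (fun _ : S => (1:ℝ)) s * |q s|) (mem_univ s)
      simpa only [hNdef, normI, one_mul] using this
    obtain ⟨zN, hzN⟩ : ∃ z : ℤ, N = (z : ℝ) := by
      obtain ⟨s0, _, hs0⟩ := Finset.exists_mem_eq_sup' (univ_nonempty (α := S))
        (fun s => (fun _ : S => (1:ℝ)) s * |q s|)
      obtain ⟨z, hz⟩ := hqint s0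
      exact ⟨|z|, by rw [hNdef, normI, hs0]; simp [hz]⟩
    have hlN : ∀ s, l s ≤ ((N : ℝ) : EReal) := fun s =>
      (hq.1 s).1.trans (EReal.coe_le_coe_iff.mpr ((le_abs_self _).trans (hqle s)))
    have huN : ∀ s, ((-N : ℝ) : EReal) ≤ u s := fun s =>
      (EReal.coe_le_coe_iff.mpr ((neg_le_neg (hqle s)).trans (neg_abs_le _))).trans (hq.1 s).2
    have hentry : ∀ s, |pI Fstar l u (fun _ => 1) δ s| ≤ N := by
      intro s
      have h1 := Finset.le_sup' (fun s => (fun _ : S => (1:ℝ)) s *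
        |pI Fstar l u (fun _ => 1) δ s|) (mem_univ s)
      have h2 := hopt q hq
      simp only [one_mul] at h1
      exact h1.trans (by simpa only [normI, hNdef, one_mul] using h2)
    have key : ∀ s, |pI Fstar l u (fun _ => 1) ((⌈δ⌉ : ℤ) : ℝ) s| ≤ N := by
      intro s
      by_cases hcase : δ ≤ N
      · have hdN : ((⌈δ⌉ : ℤ) : ℝ) ≤ N := by
          rw [hzN]; exact_mod_cast Int.ceil_le.mpr (hzN ▸ hcase)
        rw [pI_eq]
        split_ifs
        · exact clE_abs_le (hlN s) (huN s) (by rwa [abs_of_nonneg hd'0])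
        · exact clE_abs_le (hlN s) (huN s) (by rwa [abs_neg, abs_of_nonneg hd'0])
      · push_neg at hcase
        have he := hentry s
        rw [pI_eq] at he ⊢
        split_ifs with hs
        · rw [if_pos hs] at he
          rw [clE_stable_pos (hl s) he hcase hdd']
          exact he
        · rw [if_neg hs] at he
          rw [clE_stable_neg (hu s) he hcase hdd']
          exact he
    apply Finset.sup'_le
    intro s _
    simpa using key s
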